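/- Let c(p) = 1/s(p) + 1 - (1-p)^{s(p)} where s(p) = ⌈1/√p⌉. Then c(p)/(2√p) → 1 as p → 0⁺; that is, the per-item cost of Dorfman's algorithm with group size ⌈1/√p⌉ is asymptotically 2√p as the prevalence p tends to 0. -/

import Mathlib

open Filter Real Set Topology

private lemma sqrt_tendsto0 : Tendsto Real.sqrt (𝓝[>] (0:ℝ)) (𝓝 0) := by
  simpa using (Real.continuous_sqrt.tendsto 0).mono_left nhdsWithin_le_nhds

private lemma ceil_mul_sqrt_tendsto :
    Tendsto (fun p : ℝ => (⌈1 / Real.sqrt p⌉₊ : ℝ) * Real.sqrt p) (𝓝[>] 0) (𝓝 1) := by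
  have hub : Tendsto (fun p : ℝ => 1 + Real.sqrt p) (𝓝[>] 0) (𝓝 1) := by
    simpa using tendsto_const_nhds.add sqrt_tendsto0
  apply tendsto_of_tendsto_of_tendsto_of_le_of_le' tendsto_const_nhds hub
  · filter_upwards [self_mem_nhdsWithin] with p hp
    have hs : 0 < Real.sqrt p := Real.sqrt_pos.2 hp
    have h := Nat.le_ceil (1 / Real.sqrt p)
    have h2 : (1 / Real.sqrt p) * Real.sqrt p ≤ (⌈1 / Real.sqrt p⌉₊ : ℝ) * Real.sqrt p :=
      mul_le_mul_of_nonneg_right h hs.le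
    calc (1:ℝ) = (1 / Real.sqrt p) * Real.sqrt p := by field_simp
    _ ≤ _ := h2
  · filter_upwards [self_mem_nhdsWithin] with p hp
    have hs : 0 < Real.sqrt p := Real.sqrt_pos.2 hp
    have h : (⌈1 / Real.sqrt p⌉₊ : ℝ) < 1 / Real.sqrt p + 1 :=
      Nat.ceil_lt_add_one (by positivity)
    have h2 : (⌈1 / Real.sqrt p⌉₊ : ℝ) * Real.sqrt p ≤ (1 / Real.sqrt p + 1) * Real.sqrt p :=
      mul_le_mul_of_nonneg_right h.le hs.le
    calc (⌈1 / Real.sqrt p⌉₊ : ℝ) * Real.sqrt p ≤ (1 / Real.sqrt p + 1) * Real.sqrt p := h2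
    _ = 1 + Real.sqrt p := by field_simp

private lemma log_one_sub_div_tendsto :
    Tendsto (fun p : ℝ => Real.log (1 - p) / p) (𝓝[>] (0:ℝ)) (𝓝 (-1)) := by
  have hd : HasDerivAt (fun x : ℝ => Real.log (1 - x)) (-1) 0 := by
    have h1 : HasDerivAt (fun x : ℝ => 1 - x) (-1) 0 := by
      simpa using (hasDerivAt_id (0:ℝ)).const_sub (1:ℝ)
    have := (Real.hasDerivAt_log (by norm_num : (1:ℝ) - 0 ≠ 0)).comp 0 h1
    have e : ((1:ℝ) - 0)⁻¹ * -1 = -1 := by norm_num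
    rw [e] at this
    exact this
  have h := hasDerivAt_iff_tendsto_slope.1 hd
  have h2 : Tendsto (slope (fun x : ℝ => Real.log (1 - x)) 0) (𝓝[>] 0) (𝓝 (-1)) :=
    h.mono_left (nhdsWithin_mono _ (fun x hx => ne_of_gt hx))
  refine h2.congr' ?_
  filter_upwards [self_mem_nhdsWithin] with p hp
  simp [slope_fun_def, Real.log_one]; ring

private lemma exp_sub_one_div_tendsto :
    Tendsto (fun u : ℝ => (Real.exp u - 1) / u) (𝓝[≠] (0:ℝ)) (𝓝 1) := by
  have h := hasDerivAt_iff_tendsto_slope.1 (Real.hasDerivAt_exp 0)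
  simp only [Real.exp_zero] at h
  refine h.congr' ?_
  filter_upwards [self_mem_nhdsWithin] with u hu
  simp [slope_fun_def]; ring

/-- The per-item cost of Dorfman's algorithm with group size `⌈1/√p⌉`,
namely `1/s(p) + 1 - (1-p)^{s(p)}` with `s(p) = ⌈1/√p⌉`, is asymptotically
`2√p` as the prevalence `p` tends to `0` from above. -/
theorem dorfman_cost_asymptotic :
    Filter.Tendsto
      (fun p : ℝ =>
        (1 / (⌈1 / Real.sqrt p⌉₊ : ℝ) + 1 - (1 - p) ^ ⌈1 / Real.sqrt p⌉₊) / (2 * Real.sqrt p))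
      (nhdsWithin 0 (Set.Ioi 0)) (nhds 1) := by
  have hmem : Ioo (0:ℝ) 1 ∈ 𝓝[>] (0:ℝ) :=
    Ioo_mem_nhdsGT_of_mem (by norm_num : (0:ℝ) ∈ Ico (0:ℝ) 1)
  have hspos : ∀ p ∈ Ioo (0:ℝ) 1, (0:ℝ) < (⌈1 / Real.sqrt p⌉₊ : ℝ) := by
    intro p hp
    have h1 : 0 < Real.sqrt p := Real.sqrt_pos.2 hp.1
    exact_mod_cast Nat.ceil_pos.2 (by positivity : (0:ℝ) < 1 / Real.sqrt p)
  have hlogneg : ∀ p ∈ Ioo (0:ℝ) 1, Real.log (1 - p) < 0 := fun p hp =>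
    Real.log_neg (by linarith [hp.1, hp.2]) (by linarith [hp.1])
  have huneg : ∀ p ∈ Ioo (0:ℝ) 1, (⌈1 / Real.sqrt p⌉₊ : ℝ) * Real.log (1 - p) < 0 :=
    fun p hp => mul_neg_of_pos_of_neg (hspos p hp) (hlogneg p hp)
  -- u(p) = s(p) * log(1-p) tends to 0
  have hu0 : Tendsto (fun p : ℝ => (⌈1 / Real.sqrt p⌉₊ : ℝ) * Real.log (1 - p))
      (𝓝[>] (0:ℝ)) (𝓝 0) := by
    have h := (ceil_mul_sqrt_tendsto.mul log_one_sub_div_tendsto).mul sqrt_tendsto0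
    have h' : Tendsto (fun p : ℝ =>
        ((⌈1 / Real.sqrt p⌉₊ : ℝ) * Real.sqrt p) * (Real.log (1 - p) / p) * Real.sqrt p)
        (𝓝[>] (0:ℝ)) (𝓝 0) := by simpa using h
    refine h'.congr' ?_
    filter_upwards [self_mem_nhdsWithin] with p hp
    have h1 : Real.sqrt p * Real.sqrt p = p := Real.mul_self_sqrt (le_of_lt hp)
    have hp' : p ≠ 0 := ne_of_gt hp
    field_simp
    linear_combination (⌈1 / Real.sqrt p⌉₊ : ℝ) * Real.log (1 - p) * h1
  have hu : Tendsto (fun p : ℝ => (⌈1 / Real.sqrt p⌉₊ : ℝ) * Real.log (1 - p))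
      (𝓝[>] (0:ℝ)) (𝓝[≠] (0:ℝ)) := by
    rw [tendsto_nhdsWithin_iff]
    exact ⟨hu0, by filter_upwards [hmem] with p hp; exact (huneg p hp).ne⟩
  have hexp : Tendsto (fun p : ℝ =>
      (Real.exp ((⌈1 / Real.sqrt p⌉₊ : ℝ) * Real.log (1 - p)) - 1) /
        ((⌈1 / Real.sqrt p⌉₊ : ℝ) * Real.log (1 - p))) (𝓝[>] (0:ℝ)) (𝓝 1) :=
    exp_sub_one_div_tendsto.comp hu
  -- second term tends to 1/2
  have hhalf : Tendsto (fun p : ℝ =>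
      ((⌈1 / Real.sqrt p⌉₊ : ℝ) * Real.sqrt p) * (Real.log (1 - p) / p) / 2)
      (𝓝[>] (0:ℝ)) (𝓝 (-(1/2))) := by
    have := (ceil_mul_sqrt_tendsto.mul log_one_sub_div_tendsto).div_const 2
    convert this using 2
    norm_num
  have hB : Tendsto (fun p : ℝ =>
      (1 - (1 - p) ^ ⌈1 / Real.sqrt p⌉₊) / (2 * Real.sqrt p)) (𝓝[>] (0:ℝ)) (𝓝 (1/2)) := by
    have h := (hexp.mul hhalf).neg
    have h' : Tendsto (fun p : ℝ => -((Real.exp ((⌈1 / Real.sqrt p⌉₊ : ℝ) * Real.log (1 - p)) - 1) /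
        ((⌈1 / Real.sqrt p⌉₊ : ℝ) * Real.log (1 - p)) *
        (((⌈1 / Real.sqrt p⌉₊ : ℝ) * Real.sqrt p) * (Real.log (1 - p) / p) / 2)))
        (𝓝[>] (0:ℝ)) (𝓝 (1/2)) := by convert h using 2; norm_num
    refine h'.congr' ?_
    filter_upwards [hmem] with p hp
    have ht : 0 < Real.sqrt p := Real.sqrt_pos.2 hp.1
    have h1 : Real.sqrt p * Real.sqrt p = p := Real.mul_self_sqrt hp.1.le
    have hune : (⌈1 / Real.sqrt p⌉₊ : ℝ) * Real.log (1 - p) ≠ 0 := (huneg p hp).ne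
    have hpow : (1 - p) ^ ⌈1 / Real.sqrt p⌉₊ =
        Real.exp ((⌈1 / Real.sqrt p⌉₊ : ℝ) * Real.log (1 - p)) := by
      rw [Real.exp_nat_mul, Real.exp_log (by linarith [hp.2] : (0:ℝ) < 1 - p)]
    rw [hpow]
    have e1 : ((⌈1 / Real.sqrt p⌉₊ : ℝ) * Real.sqrt p) * (Real.log (1 - p) / p) / 2 =
        ((⌈1 / Real.sqrt p⌉₊ : ℝ) * Real.log (1 - p)) / (2 * Real.sqrt p) := by
      field_simp; rw [Real.sq_sqrt hp.1.le]; field_simp [hp.1.ne']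
    rw [e1]
    have hl : Real.log (1 - p) ≠ 0 := (hlogneg p hp).ne
    field_simp
    ring
  -- first term tends to 1/2
  have hA : Tendsto (fun p : ℝ =>
      (1 / (⌈1 / Real.sqrt p⌉₊ : ℝ)) / (2 * Real.sqrt p)) (𝓝[>] (0:ℝ)) (𝓝 (1/2)) := by
    have h2 : Tendsto (fun p : ℝ => 2 * ((⌈1 / Real.sqrt p⌉₊ : ℝ) * Real.sqrt p))
        (𝓝[>] (0:ℝ)) (𝓝 2) := by simpa using ceil_mul_sqrt_tendsto.const_mul 2
    have h := (tendsto_const_nhds : Tendsto (fun _ : ℝ => (1:ℝ)) (𝓝[>] (0:ℝ)) (𝓝 1)).div h2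
      (by norm_num)
    refine h.congr' ?_
    filter_upwards [hmem] with p hp
    have ht : Real.sqrt p ≠ 0 := (Real.sqrt_pos.2 hp.1).ne'
    have hS : (⌈1 / Real.sqrt p⌉₊ : ℝ) ≠ 0 := (hspos p hp).ne'
    simp only [Pi.div_apply]
    field_simp
  have hsum := hA.add hB
  have h1 : (1:ℝ)/2 + 1/2 = 1 := by norm_num
  rw [h1] at hsum
  refine Tendsto.congr' ?_ hsum
  filter_upwards [self_mem_nhdsWithin] with p hp
  ring
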